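/- arXiv:2506.03457 — 5 statements merged into one kernel-verified Lean document; each statement's English description precedes it below -/
import Mathlib

section
/- Let F be a probability measure on ℝ, M : ℝ → ℝ a nonnegative measurable function, H : ℝ → ℝ differentiable with derivative h, β ∈ ℝ^k, κ ∈ ℝ^m, and σ ∈ ℝ. Define T : ℝ^k × ℝ^m → ℝ by T(x, y) = ∫ M(q)·H(⟪x, β⟫ + ⟪y, κ⟫ + σ q) dF(q). Assume that near (x₀, y₀) the integrand is F-integrable, the partial derivatives of the integrand in (x, y) are dominated by an F-integrable function of q, and K := ∫ M(q)·h(⟪x₀, β⟫ + ⟪y₀, κ⟫ + σ q) dF(q) > 0. Let B be a designated coordinate of x with β_B = 1. Then for every coordinate ω of y, ∂T/∂y_ω(x₀, y₀) = κ_ω · K and ∂T/∂x_B(x₀, y₀) = K > 0, so that κ_ω = (∂T/∂y_ω(x₀, y₀)) / (∂T/∂x_B(x₀, y₀)). -/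
open MeasureTheory
open scoped RealInnerProductSpace

set_option maxHeartbeats 2000000 in
/-- Theorem 2 (constructive identification of the hassle parameters): with
`T(x, y) = ∫ M(q)·H(⟪x,β⟫+⟪y,κ⟫+σq) dF(q)`,
`K = ∫ M(q)·h(⟪x₀,β⟫+⟪y₀,κ⟫+σq) dF(q) > 0`, and the normalization `β_B = 1`,
every partial derivative in `y` satisfies `∂T/∂y_ω = κ_ω·K`, `∂T/∂x_B = K > 0`,
and hence `κ_ω = (∂T/∂y_ω) / (∂T/∂x_B)` at `(x₀, y₀)`. -/
theorem identification_of_hassle_parameters_full_model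
    (k m : ℕ) (F : Measure ℝ) [IsProbabilityMeasure F]
    (M : ℝ → ℝ) (hM : Measurable M) (hMnn : ∀ q, 0 ≤ M q)
    (H h : ℝ → ℝ) (hH : ∀ x, HasDerivAt H (h x) x)
    (β : EuclideanSpace ℝ (Fin k)) (κ : EuclideanSpace ℝ (Fin m)) (σ : ℝ)
    (T : EuclideanSpace ℝ (Fin k) × EuclideanSpace ℝ (Fin m) → ℝ)
    (hT : ∀ x y, T (x, y) = ∫ q, M q * H (⟪x, β⟫ + ⟪y, κ⟫ + σ * q) ∂F)
    (x₀ : EuclideanSpace ℝ (Fin k)) (y₀ : EuclideanSpace ℝ (Fin m))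
    (U : Set (EuclideanSpace ℝ (Fin k) × EuclideanSpace ℝ (Fin m)))
    (hU : U ∈ nhds (x₀, y₀))
    (hint : ∀ xy ∈ U,
      Integrable (fun q => M q * H (⟪Prod.fst xy, β⟫ + ⟪Prod.snd xy, κ⟫ + σ * q)) F)
    (b : ℝ → ℝ) (hb : Integrable b F)
    (hdom : ∀ xy ∈ U, ∀ q,
      ‖fderiv ℝ (fun z : EuclideanSpace ℝ (Fin k) × EuclideanSpace ℝ (Fin m) =>
        M q * H (⟪z.1, β⟫ + ⟪z.2, κ⟫ + σ * q)) xy‖ ≤ b q)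
    (hK : 0 < ∫ q, M q * h (⟪x₀, β⟫ + ⟪y₀, κ⟫ + σ * q) ∂F)
    (B : Fin k) (hB : β B = 1) :
    (∀ ω : Fin m,
        fderiv ℝ T (x₀, y₀) (0, EuclideanSpace.single ω 1) =
          κ ω * ∫ q, M q * h (⟪x₀, β⟫ + ⟪y₀, κ⟫ + σ * q) ∂F) ∧
      fderiv ℝ T (x₀, y₀) (EuclideanSpace.single B 1, 0) =
        ∫ q, M q * h (⟪x₀, β⟫ + ⟪y₀, κ⟫ + σ * q) ∂F ∧
      0 < fderiv ℝ T (x₀, y₀) (EuclideanSpace.single B 1, 0) ∧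
      ∀ ω : Fin m,
        κ ω = fderiv ℝ T (x₀, y₀) (0, EuclideanSpace.single ω 1) /
          fderiv ℝ T (x₀, y₀) (EuclideanSpace.single B 1, 0) := by
  classical
  set K : ℝ := ∫ q, M q * h (⟪x₀, β⟫ + ⟪y₀, κ⟫ + σ * q) ∂F with hKdef
  -- the linear part of the argument of `H`
  set L : (EuclideanSpace ℝ (Fin k) × EuclideanSpace ℝ (Fin m)) →L[ℝ] ℝ :=
    (innerSL ℝ β).comp (ContinuousLinearMap.fst ℝ (EuclideanSpace ℝ (Fin k)) (EuclideanSpace ℝ (Fin m)))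
      + (innerSL ℝ κ).comp (ContinuousLinearMap.snd ℝ (EuclideanSpace ℝ (Fin k)) (EuclideanSpace ℝ (Fin m))) with hLdef
  have hL : ∀ z : EuclideanSpace ℝ (Fin k) × EuclideanSpace ℝ (Fin m), L z = ⟪z.1, β⟫ + ⟪z.2, κ⟫ := by
    intro z
    rw [hLdef]
    simp only [ContinuousLinearMap.add_apply, ContinuousLinearMap.comp_apply,
      ContinuousLinearMap.coe_fst', ContinuousLinearMap.coe_snd', innerSL_apply_apply]
    rw [real_inner_comm β, real_inner_comm κ]
  have hHcont : Continuous H :=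
    Differentiable.continuous fun x => (hH x).differentiableAt
  -- measurability of h
  have hh : Measurable h := by
    have : h = deriv H := funext fun x => ((hH x).deriv).symm
    rw [this]; exact measurable_deriv H
  -- pointwise differentiability of the integrand in the parameter
  have hdiff : ∀ (q : ℝ) (z : EuclideanSpace ℝ (Fin k) × EuclideanSpace ℝ (Fin m)),
      HasFDerivAt (fun z : EuclideanSpace ℝ (Fin k) × EuclideanSpace ℝ (Fin m) => M q * H (⟪z.1, β⟫ + ⟪z.2, κ⟫ + σ * q))
        ((M q * h (⟪z.1, β⟫ + ⟪z.2, κ⟫ + σ * q)) • L) z := by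
    intro q z
    have hbase : HasFDerivAt (fun z : EuclideanSpace ℝ (Fin k) × EuclideanSpace ℝ (Fin m) => ⟪z.1, β⟫ + ⟪z.2, κ⟫ + σ * q) L z := by
      have : (fun z : EuclideanSpace ℝ (Fin k) × EuclideanSpace ℝ (Fin m) => ⟪z.1, β⟫ + ⟪z.2, κ⟫ + σ * q)
          = fun z : EuclideanSpace ℝ (Fin k) × EuclideanSpace ℝ (Fin m) => L z + σ * q := funext fun z => by rw [hL]
      rw [this]
      exact (L.hasFDerivAt).add_const (σ * q)
    have hcomp := (hH (⟪z.1, β⟫ + ⟪z.2, κ⟫ + σ * q)).comp_hasFDerivAt z hbase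
    have := hcomp.const_mul (M q)
    simpa [smul_smul, mul_comm, mul_assoc, Function.comp] using this
  rcases Metric.mem_nhds_iff.1 hU with ⟨ε, εpos, hball⟩
  have hx₀U : (x₀, y₀) ∈ U := mem_of_mem_nhds hU
  -- differentiation under the integral sign
  have hmeas : ∀ᶠ (z : EuclideanSpace ℝ (Fin k) × EuclideanSpace ℝ (Fin m)) in nhds (x₀, y₀),
      AEStronglyMeasurable (fun q => M q * H (⟪z.1, β⟫ + ⟪z.2, κ⟫ + σ * q)) F :=
    Filter.Eventually.of_forall fun z =>
      (hM.mul ((hHcont.measurable).comp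
        (measurable_const.add (measurable_const.mul measurable_id)))).aestronglyMeasurable
  have hint0 : Integrable (fun q => M q * H (⟪x₀, β⟫ + ⟪y₀, κ⟫ + σ * q)) F :=
    hint (x₀, y₀) hx₀U
  have hmeas' : AEStronglyMeasurable
      (fun q => (M q * h (⟪x₀, β⟫ + ⟪y₀, κ⟫ + σ * q)) • L) F :=
    ((hM.mul (hh.comp
      (measurable_const.add (measurable_const.mul measurable_id)))).aestronglyMeasurable).smul_const L
  have hbound : ∀ᵐ q ∂F, ∀ z ∈ Metric.ball (x₀, y₀) ε,
      ‖(M q * h (⟪z.1, β⟫ + ⟪z.2, κ⟫ + σ * q)) • L‖ ≤ b q := by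
    refine Filter.Eventually.of_forall fun q z hz => ?_
    have hzU : z ∈ U := hball hz
    have := hdom z hzU q
    rwa [(hdiff q z).fderiv] at this
  have hdiff' : ∀ᵐ q ∂F, ∀ z ∈ Metric.ball (x₀, y₀) ε,
      HasFDerivAt (fun z : EuclideanSpace ℝ (Fin k) × EuclideanSpace ℝ (Fin m) =>
        M q * H (⟪z.1, β⟫ + ⟪z.2, κ⟫ + σ * q))
        ((M q * h (⟪z.1, β⟫ + ⟪z.2, κ⟫ + σ * q)) • L) z :=
    Filter.Eventually.of_forall fun q z _ => hdiff q z
  have hmain : HasFDerivAt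
      (fun z : EuclideanSpace ℝ (Fin k) × EuclideanSpace ℝ (Fin m) =>
        ∫ q, M q * H (⟪z.1, β⟫ + ⟪z.2, κ⟫ + σ * q) ∂F)
      (∫ q, (M q * h (⟪x₀, β⟫ + ⟪y₀, κ⟫ + σ * q)) • L ∂F) (x₀, y₀) :=
    hasFDerivAt_integral_of_dominated_of_fderiv_le (Metric.ball_mem_nhds _ εpos) hmeas hint0 hmeas' hbound hb hdiff'
  have hint_smul : (∫ q, (M q * h (⟪x₀, β⟫ + ⟪y₀, κ⟫ + σ * q)) • L ∂F) = K • L := by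
    rw [integral_smul_const]
  rw [hint_smul] at hmain
  have hTeq : T = fun z : EuclideanSpace ℝ (Fin k) × EuclideanSpace ℝ (Fin m) => ∫ q, M q * H (⟪z.1, β⟫ + ⟪z.2, κ⟫ + σ * q) ∂F :=
    funext fun z => hT z.1 z.2
  have hfd : fderiv ℝ T (x₀, y₀) = K • L := by
    rw [hTeq]; exact hmain.fderiv
  have hy : ∀ ω : Fin m,
      fderiv ℝ T (x₀, y₀) (0, EuclideanSpace.single ω 1) = κ ω * K := by
    intro ω
    rw [hfd]
    simp [hL, EuclideanSpace.inner_single_left, mul_comm]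
  have hxB : fderiv ℝ T (x₀, y₀) (EuclideanSpace.single B 1, 0) = K := by
    rw [hfd]
    simp [hL, EuclideanSpace.inner_single_left, real_inner_comm, hB]
  refine ⟨hy, hxB, by rw [hxB]; exact hK, fun ω => ?_⟩
  rw [hy ω, hxB]
  field_simp
end

section
/- Let F be a probability measure on ℝ, M : ℝ → ℝ a nonnegative measurable function, and G, H : ℝ → ℝ differentiable with derivatives g, h and with G strictly positive. Fix γ, β ∈ ℝ^k, c, σ₁, σ₂ ∈ ℝ, and x₀ ∈ ℝ^k. Define P_start(x) = ∫ M(q)·G(⟪x, γ⟫ + σ₁ q)·H(⟪x, β⟫ + c + σ₂ q) dF(q) and P_stay(x) = ∫ M(q)·G(⟪x₀, γ⟫ + σ₁ q)·H(⟪x, β⟫ + c + σ₂ q) dF(q). Assume that near x₀ both integrands are F-integrable and their partial derivatives in x are dominated by an F-integrable function of q. Then for each coordinate ω, ∂P_start/∂x_ω(x₀) − ∂P_stay/∂x_ω(x₀) = γ_ω · ∫ M(q)·g(⟪x₀, γ⟫ + σ₁ q)·H(⟪x₀, β⟫ + c + σ₂ q) dF(q). -/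
open MeasureTheory
open scoped RealInnerProductSpace

/-- Key difference identity preceding Theorem 3: with
`P_start(x) = ∫ M(q)·G(⟪x,γ⟫+σ₁q)·H(⟪x,β⟫+c+σ₂q) dF(q)` and
`P_stay(x) = ∫ M(q)·G(⟪x₀,γ⟫+σ₁q)·H(⟪x,β⟫+c+σ₂q) dF(q)`, differencing the
partial derivatives at `x₀` removes the choice component:
`∂P_start/∂x_ω(x₀) − ∂P_stay/∂x_ω(x₀) = γ_ω ∫ M(q)·g(⟪x₀,γ⟫+σ₁q)·H(⟪x₀,β⟫+c+σ₂q) dF(q)`. -/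
theorem difference_identity_attention_component
    (k : ℕ) (F : Measure ℝ) [IsProbabilityMeasure F]
    (M : ℝ → ℝ) (hM : Measurable M) (hMnn : ∀ q, 0 ≤ M q)
    (G H g h : ℝ → ℝ)
    (hG : ∀ x, HasDerivAt G (g x) x) (hH : ∀ x, HasDerivAt H (h x) x)
    (hGpos : ∀ x, 0 < G x)
    (γ β : EuclideanSpace ℝ (Fin k)) (c σ₁ σ₂ : ℝ)
    (x₀ : EuclideanSpace ℝ (Fin k))
    (Pstart Pstay : EuclideanSpace ℝ (Fin k) → ℝ)
    (hPstart : ∀ x, Pstart x =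
      ∫ q, M q * G (⟪x, γ⟫ + σ₁ * q) * H (⟪x, β⟫ + c + σ₂ * q) ∂F)
    (hPstay : ∀ x, Pstay x =
      ∫ q, M q * G (⟪x₀, γ⟫ + σ₁ * q) * H (⟪x, β⟫ + c + σ₂ * q) ∂F)
    (U : Set (EuclideanSpace ℝ (Fin k))) (hU : U ∈ nhds x₀)
    (hint_start : ∀ x ∈ U,
      Integrable (fun q => M q * G (⟪x, γ⟫ + σ₁ * q) * H (⟪x, β⟫ + c + σ₂ * q)) F)
    (hint_stay : ∀ x ∈ U,
      Integrable (fun q => M q * G (⟪x₀, γ⟫ + σ₁ * q) * H (⟪x, β⟫ + c + σ₂ * q)) F)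
    (b : ℝ → ℝ) (hb : Integrable b F)
    (hdom_start : ∀ x ∈ U, ∀ q,
      ‖fderiv ℝ (fun y : EuclideanSpace ℝ (Fin k) =>
        M q * G (⟪y, γ⟫ + σ₁ * q) * H (⟪y, β⟫ + c + σ₂ * q)) x‖ ≤ b q)
    (hdom_stay : ∀ x ∈ U, ∀ q,
      ‖fderiv ℝ (fun y : EuclideanSpace ℝ (Fin k) =>
        M q * G (⟪x₀, γ⟫ + σ₁ * q) * H (⟪y, β⟫ + c + σ₂ * q)) x‖ ≤ b q)
    (ω : Fin k) :
    fderiv ℝ Pstart x₀ (EuclideanSpace.single ω 1) -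
        fderiv ℝ Pstay x₀ (EuclideanSpace.single ω 1) =
      γ ω * ∫ q, M q * g (⟪x₀, γ⟫ + σ₁ * q) * H (⟪x₀, β⟫ + c + σ₂ * q) ∂F := by
  set e : (EuclideanSpace ℝ (Fin k)) := EuclideanSpace.single ω 1 with he
  -- continuity / measurability of the basic functions
  have hGcont : Continuous G := by
    rw [continuous_iff_continuousAt]; exact fun t => (hG t).continuousAt
  have hHcont : Continuous H := by
    rw [continuous_iff_continuousAt]; exact fun t => (hH t).continuousAt
  have hgm : Measurable g := by
    have : g = deriv G := funext fun t => ((hG t).deriv).symm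
    rw [this]; exact measurable_deriv G
  have hhm : Measurable h := by
    have : h = deriv H := funext fun t => ((hH t).deriv).symm
    rw [this]; exact measurable_deriv H
  -- derivative of inner products
  have hinner : ∀ (v : (EuclideanSpace ℝ (Fin k))) (x : (EuclideanSpace ℝ (Fin k))), HasFDerivAt (fun y : (EuclideanSpace ℝ (Fin k)) => (⟪y, v⟫ : ℝ)) (innerSL ℝ v) x := by
    intro v x
    have : (fun y : (EuclideanSpace ℝ (Fin k)) => (⟪y, v⟫ : ℝ)) = fun y => innerSL ℝ v y :=
      funext fun y => (real_inner_comm y v).symm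
    rw [this]
    exact (innerSL ℝ v).hasFDerivAt
  have hlinγ : ∀ (q : ℝ) (x : (EuclideanSpace ℝ (Fin k))), HasFDerivAt (fun y : (EuclideanSpace ℝ (Fin k)) => ⟪y, γ⟫ + σ₁ * q) (innerSL ℝ γ) x :=
    fun q x => (hinner γ x).add_const _
  have hlinβ : ∀ (q : ℝ) (x : (EuclideanSpace ℝ (Fin k))),
      HasFDerivAt (fun y : (EuclideanSpace ℝ (Fin k)) => ⟪y, β⟫ + c + σ₂ * q) (innerSL ℝ β) x :=
    fun q x => ((hinner β x).add_const c).add_const _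
  have hGc : ∀ (q : ℝ) (x : (EuclideanSpace ℝ (Fin k))), HasFDerivAt (fun y : (EuclideanSpace ℝ (Fin k)) => G (⟪y, γ⟫ + σ₁ * q))
      (g (⟪x, γ⟫ + σ₁ * q) • innerSL ℝ γ) x :=
    fun q x => (hG _).comp_hasFDerivAt x (hlinγ q x)
  have hHc : ∀ (q : ℝ) (x : (EuclideanSpace ℝ (Fin k))), HasFDerivAt (fun y : (EuclideanSpace ℝ (Fin k)) => H (⟪y, β⟫ + c + σ₂ * q))
      (h (⟪x, β⟫ + c + σ₂ * q) • innerSL ℝ β) x :=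
    fun q x => (hH _).comp_hasFDerivAt x (hlinβ q x)
  -- the pointwise derivatives
  set Ds : (EuclideanSpace ℝ (Fin k)) → ℝ → ((EuclideanSpace ℝ (Fin k)) →L[ℝ] ℝ) := fun x q =>
    M q • (G (⟪x, γ⟫ + σ₁ * q) • (h (⟪x, β⟫ + c + σ₂ * q) • innerSL ℝ β)
      + H (⟪x, β⟫ + c + σ₂ * q) • (g (⟪x, γ⟫ + σ₁ * q) • innerSL ℝ γ)) with hDs
  set Dt : (EuclideanSpace ℝ (Fin k)) → ℝ → ((EuclideanSpace ℝ (Fin k)) →L[ℝ] ℝ) := fun x q =>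
    (M q * G (⟪x₀, γ⟫ + σ₁ * q)) • (h (⟪x, β⟫ + c + σ₂ * q) • innerSL ℝ β) with hDt
  have hDstart : ∀ (x : (EuclideanSpace ℝ (Fin k))) (q : ℝ),
      HasFDerivAt (fun y : (EuclideanSpace ℝ (Fin k)) => M q * G (⟪y, γ⟫ + σ₁ * q) * H (⟪y, β⟫ + c + σ₂ * q))
        (Ds x q) x := by
    intro x q
    have h1 := ((hGc q x).mul (hHc q x)).const_mul (M q)
    have : (fun y : (EuclideanSpace ℝ (Fin k)) => M q * (G (⟪y, γ⟫ + σ₁ * q) * H (⟪y, β⟫ + c + σ₂ * q)))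
        = fun y : (EuclideanSpace ℝ (Fin k)) => M q * G (⟪y, γ⟫ + σ₁ * q) * H (⟪y, β⟫ + c + σ₂ * q) := by
      funext y; ring
    rw [← this]
    exact h1
  have hDstay : ∀ (x : (EuclideanSpace ℝ (Fin k))) (q : ℝ),
      HasFDerivAt (fun y : (EuclideanSpace ℝ (Fin k)) => M q * G (⟪x₀, γ⟫ + σ₁ * q) * H (⟪y, β⟫ + c + σ₂ * q))
        (Dt x q) x := by
    intro x q
    exact (hHc q x).const_mul _
  -- neighborhood ball
  obtain ⟨ε, hε, hball⟩ := Metric.mem_nhds_iff.mp hU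
  have hx₀U : x₀ ∈ U := mem_of_mem_nhds hU
  -- measurability of integrands
  have hmq : ∀ (v : (EuclideanSpace ℝ (Fin k))) (d : ℝ), Measurable (fun q : ℝ => (⟪v, γ⟫ : ℝ) + σ₁ * q) := by
    intro v d; fun_prop
  have hmeas_start : ∀ x : (EuclideanSpace ℝ (Fin k)), AEStronglyMeasurable
      (fun q => M q * G (⟪x, γ⟫ + σ₁ * q) * H (⟪x, β⟫ + c + σ₂ * q)) F := by
    intro x
    apply Measurable.aestronglyMeasurable
    apply Measurable.mul
    · exact hM.mul (hGcont.measurable.comp (by fun_prop))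
    · exact hHcont.measurable.comp (by fun_prop)
  have hmeas_stay : ∀ x : (EuclideanSpace ℝ (Fin k)), AEStronglyMeasurable
      (fun q => M q * G (⟪x₀, γ⟫ + σ₁ * q) * H (⟪x, β⟫ + c + σ₂ * q)) F := by
    intro x
    apply Measurable.aestronglyMeasurable
    apply Measurable.mul
    · exact hM.mul (hGcont.measurable.comp (by fun_prop))
    · exact hHcont.measurable.comp (by fun_prop)
  -- strong measurability of the derivative integrands
  have hDs_meas : AEStronglyMeasurable (fun q => Ds x₀ q) F := by
    apply StronglyMeasurable.aestronglyMeasurable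
    apply StronglyMeasurable.smul hM.stronglyMeasurable
    apply StronglyMeasurable.add
    · apply StronglyMeasurable.smul
        ((hGcont.measurable.comp (by fun_prop : Measurable fun q : ℝ => (⟪x₀, γ⟫ : ℝ) + σ₁ * q)).stronglyMeasurable)
      exact Measurable.stronglyMeasurable <| by
        exact ((hhm.comp (by fun_prop : Measurable fun q : ℝ => (⟪x₀, β⟫ : ℝ) + c + σ₂ * q))).stronglyMeasurable.smul_const _ |>.measurable
    · apply StronglyMeasurable.smul
        ((hHcont.measurable.comp (by fun_prop : Measurable fun q : ℝ => (⟪x₀, β⟫ : ℝ) + c + σ₂ * q)).stronglyMeasurable)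
      exact Measurable.stronglyMeasurable <| by
        exact ((hgm.comp (by fun_prop : Measurable fun q : ℝ => (⟪x₀, γ⟫ : ℝ) + σ₁ * q))).stronglyMeasurable.smul_const _ |>.measurable
  have hDt_meas : AEStronglyMeasurable (fun q => Dt x₀ q) F := by
    apply StronglyMeasurable.aestronglyMeasurable
    apply StronglyMeasurable.smul
      ((hM.mul (hGcont.measurable.comp (by fun_prop : Measurable fun q : ℝ => (⟪x₀, γ⟫ : ℝ) + σ₁ * q))).stronglyMeasurable)
    exact ((hhm.comp (by fun_prop : Measurable fun q : ℝ => (⟪x₀, β⟫ : ℝ) + c + σ₂ * q))).stronglyMeasurable.smul_const _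
  -- bounds
  have hbound_start : ∀ᵐ q ∂F, ∀ x ∈ Metric.ball x₀ ε, ‖Ds x q‖ ≤ b q := by
    filter_upwards with q x hx
    have := hdom_start x (hball hx) q
    rwa [(hDstart x q).fderiv] at this
  have hbound_stay : ∀ᵐ q ∂F, ∀ x ∈ Metric.ball x₀ ε, ‖Dt x q‖ ≤ b q := by
    filter_upwards with q x hx
    have := hdom_stay x (hball hx) q
    rwa [(hDstay x q).fderiv] at this
  -- differentiation under the integral sign
  have hder_start : HasFDerivAt (fun x : (EuclideanSpace ℝ (Fin k)) =>
        ∫ q, M q * G (⟪x, γ⟫ + σ₁ * q) * H (⟪x, β⟫ + c + σ₂ * q) ∂F)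
      (∫ q, Ds x₀ q ∂F) x₀ := by
    apply hasFDerivAt_integral_of_dominated_of_fderiv_le (Metric.ball_mem_nhds x₀ hε)
      (Filter.Eventually.of_forall hmeas_start) (hint_start x₀ hx₀U) hDs_meas
      hbound_start hb
    filter_upwards with q x hx
    exact hDstart x q
  have hder_stay : HasFDerivAt (fun x : (EuclideanSpace ℝ (Fin k)) =>
        ∫ q, M q * G (⟪x₀, γ⟫ + σ₁ * q) * H (⟪x, β⟫ + c + σ₂ * q) ∂F)
      (∫ q, Dt x₀ q ∂F) x₀ := by
    apply hasFDerivAt_integral_of_dominated_of_fderiv_le (Metric.ball_mem_nhds x₀ hε)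
      (Filter.Eventually.of_forall hmeas_stay) (hint_stay x₀ hx₀U) hDt_meas
      hbound_stay hb
    filter_upwards with q x hx
    exact hDstay x q
  -- integrability of the derivative families
  have hDs_int : Integrable (fun q => Ds x₀ q) F := by
    apply hb.mono' hDs_meas
    filter_upwards with q
    have := hdom_start x₀ hx₀U q
    rwa [(hDstart x₀ q).fderiv] at this
  have hDt_int : Integrable (fun q => Dt x₀ q) F := by
    apply hb.mono' hDt_meas
    filter_upwards with q
    have := hdom_stay x₀ hx₀U q
    rwa [(hDstay x₀ q).fderiv] at this
  -- rewrite the fderivs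
  have hPs : Pstart = fun x : (EuclideanSpace ℝ (Fin k)) =>
      ∫ q, M q * G (⟪x, γ⟫ + σ₁ * q) * H (⟪x, β⟫ + c + σ₂ * q) ∂F := funext hPstart
  have hPt : Pstay = fun x : (EuclideanSpace ℝ (Fin k)) =>
      ∫ q, M q * G (⟪x₀, γ⟫ + σ₁ * q) * H (⟪x, β⟫ + c + σ₂ * q) ∂F := funext hPstay
  rw [hPs, hPt, hder_start.fderiv, hder_stay.fderiv,
    ContinuousLinearMap.integral_apply hDs_int e, ContinuousLinearMap.integral_apply hDt_int e]
  -- pointwise evaluation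
  have happly : ∀ (v : (EuclideanSpace ℝ (Fin k))), (innerSL ℝ v) e = v ω := by
    intro v
    simp [he, innerSL_apply_apply, EuclideanSpace.inner_single_right]
  have hint1 : Integrable (fun q => Ds x₀ q e) F :=
    (ContinuousLinearMap.apply ℝ ℝ e).integrable_comp hDs_int
  have hint2 : Integrable (fun q => Dt x₀ q e) F :=
    (ContinuousLinearMap.apply ℝ ℝ e).integrable_comp hDt_int
  rw [← integral_sub hint1 hint2]
  rw [show (γ ω * ∫ q, M q * g (⟪x₀, γ⟫ + σ₁ * q) * H (⟪x₀, β⟫ + c + σ₂ * q) ∂F)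
      = ∫ q, γ ω * (M q * g (⟪x₀, γ⟫ + σ₁ * q) * H (⟪x₀, β⟫ + c + σ₂ * q)) ∂F from
    (integral_const_mul _ _).symm]
  congr 1
  funext q
  simp only [hDs, hDt, ContinuousLinearMap.add_apply, ContinuousLinearMap.smul_apply,
    smul_eq_mul, happly]
  ring
end

section
/- With F, M, G, H, g, h, γ, β, c, σ₁, σ₂, x₀, P_start, and P_stay as in the preceding difference identity, assume additionally that K := ∫ M(q)·g(⟪x₀, γ⟫ + σ₁ q)·H(⟪x₀, β⟫ + c + σ₂ q) dF(q) > 0 and that γ_B = 1 for a designated coordinate B. Then ∂P_start/∂x_B(x₀) − ∂P_stay/∂x_B(x₀) = K > 0, and for every coordinate ω, γ_ω = [∂P_start/∂x_ω(x₀) − ∂P_stay/∂x_ω(x₀)] / [∂P_start/∂x_B(x₀) − ∂P_stay/∂x_B(x₀)]. -/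
open MeasureTheory
open scoped RealInnerProductSpace

/-- Theorem 3 (constructive identification of the attention parameters): on top
of the difference identity hypotheses, if
`K = ∫ M(q)·g(⟪x₀,γ⟫+σ₁q)·H(⟪x₀,β⟫+c+σ₂q) dF(q) > 0` and `γ_B = 1`, then the
differenced derivative in the benefit coordinate equals `K > 0` and every
attention parameter is identified as
`γ_ω = [∂P_start/∂x_ω − ∂P_stay/∂x_ω] / [∂P_start/∂x_B − ∂P_stay/∂x_B]` at `x₀`. -/
theorem identification_of_attention_parameters_full_model
    (k : ℕ) (F : Measure ℝ) [IsProbabilityMeasure F]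
    (M : ℝ → ℝ) (hM : Measurable M) (hMnn : ∀ q, 0 ≤ M q)
    (G H g h : ℝ → ℝ)
    (hG : ∀ x, HasDerivAt G (g x) x) (hH : ∀ x, HasDerivAt H (h x) x)
    (hGpos : ∀ x, 0 < G x)
    (γ β : EuclideanSpace ℝ (Fin k)) (c σ₁ σ₂ : ℝ)
    (x₀ : EuclideanSpace ℝ (Fin k))
    (Pstart Pstay : EuclideanSpace ℝ (Fin k) → ℝ)
    (hPstart : ∀ x, Pstart x =
      ∫ q, M q * G (⟪x, γ⟫ + σ₁ * q) * H (⟪x, β⟫ + c + σ₂ * q) ∂F)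
    (hPstay : ∀ x, Pstay x =
      ∫ q, M q * G (⟪x₀, γ⟫ + σ₁ * q) * H (⟪x, β⟫ + c + σ₂ * q) ∂F)
    (U : Set (EuclideanSpace ℝ (Fin k))) (hU : U ∈ nhds x₀)
    (hint_start : ∀ x ∈ U,
      Integrable (fun q => M q * G (⟪x, γ⟫ + σ₁ * q) * H (⟪x, β⟫ + c + σ₂ * q)) F)
    (hint_stay : ∀ x ∈ U,
      Integrable (fun q => M q * G (⟪x₀, γ⟫ + σ₁ * q) * H (⟪x, β⟫ + c + σ₂ * q)) F)
    (b : ℝ → ℝ) (hb : Integrable b F)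
    (hdom_start : ∀ x ∈ U, ∀ q,
      ‖fderiv ℝ (fun y : EuclideanSpace ℝ (Fin k) =>
        M q * G (⟪y, γ⟫ + σ₁ * q) * H (⟪y, β⟫ + c + σ₂ * q)) x‖ ≤ b q)
    (hdom_stay : ∀ x ∈ U, ∀ q,
      ‖fderiv ℝ (fun y : EuclideanSpace ℝ (Fin k) =>
        M q * G (⟪x₀, γ⟫ + σ₁ * q) * H (⟪y, β⟫ + c + σ₂ * q)) x‖ ≤ b q)
    (hK : 0 < ∫ q, M q * g (⟪x₀, γ⟫ + σ₁ * q) * H (⟪x₀, β⟫ + c + σ₂ * q) ∂F)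
    (B : Fin k) (hB : γ B = 1) :
    (fderiv ℝ Pstart x₀ (EuclideanSpace.single B 1) -
        fderiv ℝ Pstay x₀ (EuclideanSpace.single B 1) =
      ∫ q, M q * g (⟪x₀, γ⟫ + σ₁ * q) * H (⟪x₀, β⟫ + c + σ₂ * q) ∂F) ∧
      (0 < fderiv ℝ Pstart x₀ (EuclideanSpace.single B 1) -
        fderiv ℝ Pstay x₀ (EuclideanSpace.single B 1)) ∧
      ∀ ω : Fin k,
        γ ω =
          (fderiv ℝ Pstart x₀ (EuclideanSpace.single ω 1) -
              fderiv ℝ Pstay x₀ (EuclideanSpace.single ω 1)) /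
            (fderiv ℝ Pstart x₀ (EuclideanSpace.single B 1) -
              fderiv ℝ Pstay x₀ (EuclideanSpace.single B 1)) := by
  classical
  set K := ∫ q, M q * g (⟪x₀, γ⟫ + σ₁ * q) * H (⟪x₀, β⟫ + c + σ₂ * q) ∂F with hKdef
  -- basic regularity facts
  have hGc : Continuous G := continuous_iff_continuousAt.2 fun x => (hG x).differentiableAt.continuousAt
  have hHc : Continuous H := continuous_iff_continuousAt.2 fun x => (hH x).differentiableAt.continuousAt
  have hgm : Measurable g := by
    have : g = deriv G := funext fun x => ((hG x).deriv).symm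
    rw [this]; exact measurable_deriv G
  have hhm : Measurable h := by
    have : h = deriv H := funext fun x => ((hH x).deriv).symm
    rw [this]; exact measurable_deriv H
  -- derivative of the linear parts
  have hlinγ : ∀ (x : EuclideanSpace ℝ (Fin k)) (q : ℝ),
      HasFDerivAt (fun y : EuclideanSpace ℝ (Fin k) => ⟪y, γ⟫ + σ₁ * q) (innerSL ℝ γ) x := by
    intro x q
    have h : (fun y : EuclideanSpace ℝ (Fin k) => ⟪y, γ⟫ + σ₁ * q) = fun y => innerSL ℝ γ y + σ₁ * q := by
      funext y; rw [innerSL_apply_apply, real_inner_comm]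
    rw [h]; exact ((innerSL ℝ γ).hasFDerivAt (x := x)).add_const (σ₁ * q)
  have hlinβ : ∀ (x : EuclideanSpace ℝ (Fin k)) (q : ℝ),
      HasFDerivAt (fun y : EuclideanSpace ℝ (Fin k) => ⟪y, β⟫ + c + σ₂ * q) (innerSL ℝ β) x := by
    intro x q
    have h : (fun y : EuclideanSpace ℝ (Fin k) => ⟪y, β⟫ + c + σ₂ * q)
        = fun y => innerSL ℝ β y + (c + σ₂ * q) := by
      funext y; rw [innerSL_apply_apply, real_inner_comm]; ring
    rw [h]; exact ((innerSL ℝ β).hasFDerivAt (x := x)).add_const (c + σ₂ * q)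
  -- candidate derivatives of the integrands
  set Ds : EuclideanSpace ℝ (Fin k) → ℝ → (EuclideanSpace ℝ (Fin k) →L[ℝ] ℝ) := fun x q =>
    (M q * G (⟪x, γ⟫ + σ₁ * q)) • (h (⟪x, β⟫ + c + σ₂ * q) • innerSL ℝ β)
      + H (⟪x, β⟫ + c + σ₂ * q) • (M q • (g (⟪x, γ⟫ + σ₁ * q) • innerSL ℝ γ)) with hDs
  set Dy : EuclideanSpace ℝ (Fin k) → ℝ → (EuclideanSpace ℝ (Fin k) →L[ℝ] ℝ) := fun x q =>
    (M q * G (⟪x₀, γ⟫ + σ₁ * q)) • (h (⟪x, β⟫ + c + σ₂ * q) • innerSL ℝ β) with hDy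
  have hdStart : ∀ (x : EuclideanSpace ℝ (Fin k)) (q : ℝ),
      HasFDerivAt (fun y : EuclideanSpace ℝ (Fin k) => M q * G (⟪y, γ⟫ + σ₁ * q) * H (⟪y, β⟫ + c + σ₂ * q))
        (Ds x q) x := by
    intro x q
    have h1 : HasFDerivAt (fun y : EuclideanSpace ℝ (Fin k) => M q * G (⟪y, γ⟫ + σ₁ * q))
        (M q • (g (⟪x, γ⟫ + σ₁ * q) • innerSL ℝ γ)) x :=
      (((hG _).comp_hasFDerivAt x (hlinγ x q))).const_mul (M q)
    have h2 : HasFDerivAt (fun y : EuclideanSpace ℝ (Fin k) => H (⟪y, β⟫ + c + σ₂ * q))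
        (h (⟪x, β⟫ + c + σ₂ * q) • innerSL ℝ β) x :=
      (hH _).comp_hasFDerivAt x (hlinβ x q)
    exact h1.mul h2
  have hdStay : ∀ (x : EuclideanSpace ℝ (Fin k)) (q : ℝ),
      HasFDerivAt (fun y : EuclideanSpace ℝ (Fin k) => M q * G (⟪x₀, γ⟫ + σ₁ * q) * H (⟪y, β⟫ + c + σ₂ * q))
        (Dy x q) x := by
    intro x q
    exact ((hH _).comp_hasFDerivAt x (hlinβ x q)).const_mul (M q * G (⟪x₀, γ⟫ + σ₁ * q))
  -- neighborhood data
  have hx₀U : x₀ ∈ U := mem_of_mem_nhds hU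
  obtain ⟨ε, εpos, hball⟩ := Metric.mem_nhds_iff.1 hU
  -- measurability of integrands
  have hmeasq : ∀ x : EuclideanSpace ℝ (Fin k), Measurable fun q =>
      M q * G (⟪x, γ⟫ + σ₁ * q) * H (⟪x, β⟫ + c + σ₂ * q) := by
    intro x
    exact (hM.mul ((hGc.measurable).comp
        (measurable_const.add (measurable_const.mul measurable_id)))).mul
      ((hHc.measurable).comp (measurable_const.add (measurable_const.mul measurable_id)))
  have hmeasq' : ∀ x : EuclideanSpace ℝ (Fin k), Measurable fun q =>
      M q * G (⟪x₀, γ⟫ + σ₁ * q) * H (⟪x, β⟫ + c + σ₂ * q) := by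
    intro x
    exact (hM.mul ((hGc.measurable).comp
        (measurable_const.add (measurable_const.mul measurable_id)))).mul
      ((hHc.measurable).comp (measurable_const.add (measurable_const.mul measurable_id)))
  have mg0 : Measurable fun q => g (⟪x₀, γ⟫ + σ₁ * q) :=
    hgm.comp (measurable_const.add (measurable_const.mul measurable_id))
  have mh0 : Measurable fun q => h (⟪x₀, β⟫ + c + σ₂ * q) :=
    hhm.comp (measurable_const.add (measurable_const.mul measurable_id))
  have mG0 : Measurable fun q => G (⟪x₀, γ⟫ + σ₁ * q) :=
    hGc.measurable.comp (measurable_const.add (measurable_const.mul measurable_id))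
  have mH0 : Measurable fun q => H (⟪x₀, β⟫ + c + σ₂ * q) :=
    hHc.measurable.comp (measurable_const.add (measurable_const.mul measurable_id))
  have hsmDy : StronglyMeasurable fun q => Dy x₀ q := by
    simp only [hDy]
    exact ((hM.mul mG0).stronglyMeasurable).smul (mh0.stronglyMeasurable.smul_const _)
  have hsmDs : StronglyMeasurable fun q => Ds x₀ q := by
    simp only [hDs]
    exact (((hM.mul mG0).stronglyMeasurable).smul
        (mh0.stronglyMeasurable.smul_const _)).add
      ((mH0.stronglyMeasurable).smul ((hM.stronglyMeasurable).smul
        (mg0.stronglyMeasurable.smul_const _)))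
  -- norm bounds from the domination hypotheses
  have hbound_s : ∀ x ∈ U, ∀ q, ‖Ds x q‖ ≤ b q := by
    intro x hx q
    have h' := hdom_start x hx q
    rwa [(hdStart x q).fderiv] at h'
  have hbound_y : ∀ x ∈ U, ∀ q, ‖Dy x q‖ ≤ b q := by
    intro x hx q
    have h' := hdom_stay x hx q
    rwa [(hdStay x q).fderiv] at h'
  -- differentiation under the integral sign
  have hfds : HasFDerivAt
      (fun x : EuclideanSpace ℝ (Fin k) => ∫ q, M q * G (⟪x, γ⟫ + σ₁ * q) * H (⟪x, β⟫ + c + σ₂ * q) ∂F)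
      (∫ q, Ds x₀ q ∂F) x₀ := by
    refine hasFDerivAt_integral_of_dominated_of_fderiv_le (F' := fun x q => Ds x q) (Metric.ball_mem_nhds x₀ εpos)
      (Filter.Eventually.of_forall fun x => (hmeasq x).aestronglyMeasurable)
      (hint_start x₀ hx₀U) hsmDs.aestronglyMeasurable
      (Filter.Eventually.of_forall fun q x hx => hbound_s x (hball hx) q) hb
      (Filter.Eventually.of_forall fun q x hx => hdStart x q)
  have hfdy : HasFDerivAt
      (fun x : EuclideanSpace ℝ (Fin k) => ∫ q, M q * G (⟪x₀, γ⟫ + σ₁ * q) * H (⟪x, β⟫ + c + σ₂ * q) ∂F)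
      (∫ q, Dy x₀ q ∂F) x₀ := by
    refine hasFDerivAt_integral_of_dominated_of_fderiv_le (F' := fun x q => Dy x q) (Metric.ball_mem_nhds x₀ εpos)
      (Filter.Eventually.of_forall fun x => (hmeasq' x).aestronglyMeasurable)
      (hint_stay x₀ hx₀U) hsmDy.aestronglyMeasurable
      (Filter.Eventually.of_forall fun q x hx => hbound_y x (hball hx) q) hb
      (Filter.Eventually.of_forall fun q x hx => hdStay x q)
  have hPs : fderiv ℝ Pstart x₀ = ∫ q, Ds x₀ q ∂F := by
    have hfe : Pstart = fun x : EuclideanSpace ℝ (Fin k) =>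
        ∫ q, M q * G (⟪x, γ⟫ + σ₁ * q) * H (⟪x, β⟫ + c + σ₂ * q) ∂F := funext hPstart
    rw [hfe]; exact hfds.fderiv
  have hPy : fderiv ℝ Pstay x₀ = ∫ q, Dy x₀ q ∂F := by
    have hfe : Pstay = fun x : EuclideanSpace ℝ (Fin k) =>
        ∫ q, M q * G (⟪x₀, γ⟫ + σ₁ * q) * H (⟪x, β⟫ + c + σ₂ * q) ∂F := funext hPstay
    rw [hfe]; exact hfdy.fderiv
  have hintDs : Integrable (fun q => Ds x₀ q) F :=
    hb.mono' hsmDs.aestronglyMeasurable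
      (Filter.Eventually.of_forall fun q => hbound_s x₀ hx₀U q)
  have hintDy : Integrable (fun q => Dy x₀ q) F :=
    hb.mono' hsmDy.aestronglyMeasurable
      (Filter.Eventually.of_forall fun q => hbound_y x₀ hx₀U q)
  -- the key differenced-derivative identity
  have key : ∀ v : EuclideanSpace ℝ (Fin k), fderiv ℝ Pstart x₀ v - fderiv ℝ Pstay x₀ v = ⟪γ, v⟫ * K := by
    intro v
    rw [hPs, hPy, ContinuousLinearMap.integral_apply hintDs v,
      ContinuousLinearMap.integral_apply hintDy v,
      ← integral_sub (hintDs.apply_continuousLinearMap v)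
        (hintDy.apply_continuousLinearMap v)]
    have hpt : ∀ q, Ds x₀ q v - Dy x₀ q v
        = (M q * g (⟪x₀, γ⟫ + σ₁ * q) * H (⟪x₀, β⟫ + c + σ₂ * q)) * ⟪γ, v⟫ := by
      intro q
      simp only [hDs, hDy, ContinuousLinearMap.add_apply, ContinuousLinearMap.smul_apply,
        innerSL_apply_apply, smul_eq_mul]
      ring
    calc ∫ q, (Ds x₀ q v - Dy x₀ q v) ∂F
        = ∫ q, (M q * g (⟪x₀, γ⟫ + σ₁ * q) * H (⟪x₀, β⟫ + c + σ₂ * q)) * ⟪γ, v⟫ ∂F := by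
          exact integral_congr_ae (Filter.Eventually.of_forall fun q => hpt q)
      _ = K * ⟪γ, v⟫ := by rw [integral_mul_const, hKdef]
      _ = ⟪γ, v⟫ * K := mul_comm _ _
  have keyB := key (EuclideanSpace.single B 1)
  have hinnB : ⟪γ, (EuclideanSpace.single B (1:ℝ) : EuclideanSpace ℝ (Fin k))⟫ = γ B := by
    simp [EuclideanSpace.inner_single_right]
  rw [hinnB, hB, one_mul] at keyB
  refine ⟨keyB, by rw [keyB]; exact hK, ?_⟩
  intro ω
  have keyω := key (EuclideanSpace.single ω 1)
  have hinnω : ⟪γ, (EuclideanSpace.single ω (1:ℝ) : EuclideanSpace ℝ (Fin k))⟫ = γ ω := by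
    simp [EuclideanSpace.inner_single_right]
  rw [hinnω] at keyω
  rw [keyω, keyB, mul_div_assoc, div_self hK.ne', mul_one]
end

section
/- Fix a period length T = 4, a real q, an attention index a ∈ ℝ, a base choice utility u ∈ ℝ, a hassle index κ ∈ ℝ, and reals σ₁, σ₂. Let G, H : ℝ → ℝ be any functions, and define the single-period transition probabilities π(1 | d, z) = G(a + σ₁ q)^{1−d} · H(u + s(d, z)·κ + σ₂ q) and π(0 | d, z) = 1 − π(1 | d, z), where s(d, z) = max(1 − d, d·z). Consider the path d̊ = (1, 1, 0, 0) with recertification indicators z̊ = (0, 1, 0, 0), and the path d̈ = (0, 1, 1, 0) with z̈ = (0, 0, 1, 0), both with initial state d₀ = 0. Then (i) ∏_{t=1}^4 π(d̊_t | d̊_{t−1}, z̊_t) = ∏_{t=1}^4 π(d̈_t | d̈_{t−1}, z̈_t), and (ii) the period-2 choice utility along d̊ equals the period-3 choice utility along d̈, both being u + κ + σ₂ q. -/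
/-- Existence of sequences satisfying the high-level assumptions H1 and H2 of
Theorem 3 with `T = 4` and time-invariant covariates: for the paths
`d̊ = (1,1,0,0)` with recertification `z̊ = (0,1,0,0)` and `d̈ = (0,1,1,0)` with
`z̈ = (0,0,1,0)`, both started at `d₀ = 0`, (i) the products of single-period
transition probabilities coincide (H1), and (ii) the period-2 choice utility
along `d̊` equals the period-3 choice utility along `d̈`, both being
`u + κ + σ₂·q` (H2). Here `π(1 | d, z) = G(a+σ₁q)^{1-d} · H(u + s(d,z)·κ + σ₂q)`,
`π(0 | d, z) = 1 − π(1 | d, z)`, and `s(d,z) = max(1−d, d·z)`. -/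
theorem existence_of_H1_H2_sequences
    (q a u κ σ₁ σ₂ : ℝ) (G H : ℝ → ℝ)
    (s : ℕ → ℕ → ℕ) (hs : ∀ d z, s d z = max (1 - d) (d * z))
    (π : ℕ → ℕ → ℕ → ℝ)
    (hπ1 : ∀ d z, π 1 d z =
      G (a + σ₁ * q) ^ (1 - d) * H (u + (s d z : ℝ) * κ + σ₂ * q))
    (hπ0 : ∀ d z, π 0 d z = 1 - π 1 d z)
    (dring : Fin 5 → ℕ) (hdring : dring = ![0, 1, 1, 0, 0])
    (zring : Fin 4 → ℕ) (hzring : zring = ![0, 1, 0, 0])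
    (dddot : Fin 5 → ℕ) (hdddot : dddot = ![0, 0, 1, 1, 0])
    (zddot : Fin 4 → ℕ) (hzddot : zddot = ![0, 0, 1, 0]) :
    (∏ t : Fin 4, π (dring t.succ) (dring t.castSucc) (zring t) =
        ∏ t : Fin 4, π (dddot t.succ) (dddot t.castSucc) (zddot t)) ∧
      (u + (s (dring 1) (zring 1) : ℝ) * κ + σ₂ * q =
        u + (s (dddot 2) (zddot 2) : ℝ) * κ + σ₂ * q) ∧
      (u + (s (dring 1) (zring 1) : ℝ) * κ + σ₂ * q = u + κ + σ₂ * q) := by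
  subst hdring hzring hdddot hzddot
  refine ⟨?_, ?_, ?_⟩
  · have e0 : (Fin.castAdd 1 (0:Fin 4)) = (0:Fin 5) := rfl
    have e1 : (Fin.castAdd 1 (1:Fin 4)) = (1:Fin 5) := rfl
    have e2 : (Fin.castAdd 1 (2:Fin 4)) = (2:Fin 5) := rfl
    have e3 : (Fin.castAdd 1 (3:Fin 4)) = (3:Fin 5) := rfl
    simp only [Fin.prod_univ_four, Fin.succ, Fin.castSucc, e0, e1, e2, e3,
      Matrix.cons_val_zero, Matrix.cons_val_one, Matrix.head_cons, hπ1, hπ0, hs]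
    norm_num [Matrix.cons_val_two, Matrix.tail_cons, Matrix.cons_val_three, hπ1, hπ0, hs]
    ring
  · simp [hs]
  · simp [hs]
end

section
/- Fix T ≥ 1. Let F be a probability measure on ℝ and let ν₁, …, ν_T, μ₁, …, μ_T be probability measures on ℝ with distribution-type functions G_t(a) := ν_t{e : e < a} and H_t(c) := μ_t{v : v < c}. Work on the product probability space Ω = ℝ × ∏_{t=1}^T (ℝ × ℝ) with measure F ⊗ ⨂_{t=1}^T (ν_t ⊗ μ_t), writing a sample point as (q, (e₁, v₁), …, (e_T, v_T)). Fix reals σ₁, σ₂, attention indices a_t, and choice utilities c_t(d) for d ∈ {0,1}, and define the shocks ε_t = e_t − σ₁ q and ξ_t = v_t − σ₂ q, and the process D₀ = 0, D_t = 1 if (D_{t−1} = 1 or a_t > ε_t) and c_t(D_{t−1}) > ξ_t, else D_t = 0. Then for every path (d₁, …, d_T) ∈ {0,1}^T, the probability that D_t = d_t for all t equals ∫ ∏_{t=1}^T [G_t(a_t + σ₁ q)^{1−d_{t−1}} · H_t(c_t(d_{t−1}) + σ₂ q)]^{d_t} · [1 − G_t(a_t + σ₁ q)^{1−d_{t−1}}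 · H_t(c_t(d_{t−1}) + σ₂ q)]^{1−d_t} dF(q). -/
open MeasureTheory
open scoped ENNReal

/-- Likelihood decomposition underlying the MLE of the full two-stage
inattention model: on the product space `ℝ × ∏_{t} (ℝ × ℝ)` with measure
`F ⊗ ⨂_t (ν_t ⊗ μ_t)`, writing a sample point as `(q, (e_t, v_t)_t)`, the
shocks are `ε_t = e_t − σ₁q` and `ξ_t = v_t − σ₂q`, the take-up process is
`D₀ = 0`, `D_t = 1` iff (`D_{t−1} = 1` or `a_t > ε_t`) and `c_t(D_{t−1}) > ξ_t`,
and the probability of any path `(d₁,…,d_T) ∈ {0,1}^T` equals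
`∫ ∏_t [G_t(a_t+σ₁q)^{1−d_{t−1}} H_t(c_t(d_{t−1})+σ₂q)]^{d_t}
      [1 − G_t(a_t+σ₁q)^{1−d_{t−1}} H_t(c_t(d_{t−1})+σ₂q)]^{1−d_t} dF(q)`. -/
theorem mle_likelihood_decomposition
    (T : ℕ) (hT : 1 ≤ T)
    (F : Measure ℝ) [IsProbabilityMeasure F]
    (ν μ : Fin T → Measure ℝ)
    [∀ t, IsProbabilityMeasure (ν t)] [∀ t, IsProbabilityMeasure (μ t)]
    (σ₁ σ₂ : ℝ) (a : Fin T → ℝ) (c : Fin T → ℕ → ℝ)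
    (ε ξ : Fin T → (ℝ × (Fin T → ℝ × ℝ)) → ℝ)
    (hε : ∀ (t : Fin T) ω, ε t ω = (ω.2 t).1 - σ₁ * ω.1)
    (hξ : ∀ (t : Fin T) ω, ξ t ω = (ω.2 t).2 - σ₂ * ω.1)
    (D : ℕ → (ℝ × (Fin T → ℝ × ℝ)) → ℕ)
    (hD0 : ∀ ω, D 0 ω = 0)
    (hDt : ∀ (t : Fin T) ω,
      D ((t : ℕ) + 1) ω =
        if (D (t : ℕ) ω = 1 ∨ a t > ε t ω) ∧ c t (D (t : ℕ) ω) > ξ t ω then 1 else 0)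
    (d : ℕ → ℕ) (hd0 : d 0 = 0)
    (hdbin : ∀ t : Fin T, d ((t : ℕ) + 1) = 0 ∨ d ((t : ℕ) + 1) = 1) :
    ((F.prod (Measure.pi fun t : Fin T => (ν t).prod (μ t)))
        {ω | ∀ t : Fin T, D ((t : ℕ) + 1) ω = d ((t : ℕ) + 1)}).toReal =
      ∫ q, ∏ t : Fin T,
        ((ν t {e | e < a t + σ₁ * q}).toReal ^ (1 - d (t : ℕ)) *
            (μ t {v | v < c t (d (t : ℕ)) + σ₂ * q}).toReal) ^ d ((t : ℕ) + 1) *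
          (1 - (ν t {e | e < a t + σ₁ * q}).toReal ^ (1 - d (t : ℕ)) *
            (μ t {v | v < c t (d (t : ℕ)) + σ₂ * q}).toReal) ^ (1 - d ((t : ℕ) + 1)) ∂F := by
  classical
  -- values of d on relevant indices
  have hdval : ∀ t : Fin T, d (t : ℕ) = 0 ∨ d (t : ℕ) = 1 := by
    intro t
    rcases Nat.eq_zero_or_eq_succ_pred (t : ℕ) with h0 | hs
    · exact Or.inl (h0 ▸ hd0)
    · have hk : (t : ℕ) - 1 < T := lt_of_le_of_lt (Nat.pred_le _) t.isLt
      have := hdbin ⟨(t : ℕ) - 1, hk⟩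
      rw [hs]
      simpa using this
  -- per-period success sets
  set S : Fin T → ℝ → Set (ℝ × ℝ) := fun t q =>
    {p : ℝ × ℝ | (d (t : ℕ) = 1 ∨ p.1 < a t + σ₁ * q) ∧ p.2 < c t (d (t : ℕ)) + σ₂ * q}
    with hSdef
  set A : Fin T → ℝ → Set (ℝ × ℝ) := fun t q =>
    if d ((t : ℕ) + 1) = 1 then S t q else (S t q)ᶜ with hAdef
  -- S as a product of intervals
  have hSshape : ∀ (t : Fin T) (q : ℝ),
      S t q = (if d (t : ℕ) = 1 then (Set.univ : Set ℝ) else Set.Iio (a t + σ₁ * q)) ×ˢ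
        Set.Iio (c t (d (t : ℕ)) + σ₂ * q) := by
    intro t q
    by_cases h : d (t : ℕ) = 1 <;> ext p <;>
      simp [hSdef, h, Set.mem_prod]
  have hSmeas : ∀ (t : Fin T) (q : ℝ), MeasurableSet (S t q) := by
    intro t q
    rw [hSshape]
    exact MeasurableSet.prod (by split <;> simp) measurableSet_Iio
  have hSval : ∀ (t : Fin T) (q : ℝ),
      ((ν t).prod (μ t)) (S t q) =
        ν t (Set.Iio (a t + σ₁ * q)) ^ (1 - d (t : ℕ)) *
          μ t (Set.Iio (c t (d (t : ℕ)) + σ₂ * q)) := by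
    intro t q
    rw [hSshape, Measure.prod_prod]
    rcases hdval t with h | h <;> simp [h]
  -- the event as a "cylinder" event
  set E : Set (ℝ × (Fin T → ℝ × ℝ)) := {ω | ∀ t : Fin T, ω.2 t ∈ A t ω.1} with hEdef
  have hSmem : ∀ (t : Fin T) (ω : ℝ × (Fin T → ℝ × ℝ)),
      ω.2 t ∈ S t ω.1 ↔ ((d (t : ℕ) = 1 ∨ a t > ε t ω) ∧ c t (d (t : ℕ)) > ξ t ω) := by
    intro t ω
    simp only [hSdef, Set.mem_setOf_eq, hε, hξ, gt_iff_lt, sub_lt_iff_lt_add]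
  -- event equality
  have hE_eq : {ω : ℝ × (Fin T → ℝ × ℝ) |
      ∀ t : Fin T, D ((t : ℕ) + 1) ω = d ((t : ℕ) + 1)} = E := by
    ext ω
    simp only [Set.mem_setOf_eq, hEdef]
    have hA' : ∀ t : Fin T, ω.2 t ∈ A t ω.1 ↔
        (if d ((t : ℕ) + 1) = 1 then ω.2 t ∈ S t ω.1 else ω.2 t ∉ S t ω.1) := by
      intro t
      simp only [hAdef]
      split <;> simp
    constructor
    · intro h t
      -- all earlier values agree
      have hAll : ∀ s : Fin T, D (s : ℕ) ω = d (s : ℕ) := by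
        intro s
        rcases Nat.eq_zero_or_eq_succ_pred (s : ℕ) with h0 | hs
        · rw [h0, hD0, hd0]
        · have hk : (s : ℕ) - 1 < T := lt_of_le_of_lt (Nat.pred_le _) s.isLt
          have := h ⟨(s : ℕ) - 1, hk⟩
          rw [hs]
          simpa using this
      have ht := hDt t ω
      rw [hAll t] at ht
      have hmem := hSmem t ω
      have hcur := h t
      rw [ht] at hcur
      rw [hA' t]
      by_cases hP : (d (t : ℕ) = 1 ∨ a t > ε t ω) ∧ c t (d (t : ℕ)) > ξ t ω
      · rw [if_pos hP] at hcur
        rw [if_pos hcur.symm]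
        exact hmem.mpr hP
      · rw [if_neg hP] at hcur
        rw [if_neg (by omega)]
        exact fun hmem' => hP (hmem.mp hmem')
    · intro h
      have hAll : ∀ n, n ≤ T → D n ω = d n := by
        intro n
        induction n with
        | zero => intro _; rw [hD0, hd0]
        | succ k ih =>
          intro hk
          have hkT : k < T := hk
          have hprev : D k ω = d k := ih (le_of_lt hkT)
          have ht := hDt ⟨k, hkT⟩ ω
          simp only [Fin.val_mk] at ht
          rw [hprev] at ht
          have hmem := hSmem ⟨k, hkT⟩ ω
          simp only [Fin.val_mk] at hmem
          have hA := (hA' ⟨k, hkT⟩).mp (h ⟨k, hkT⟩)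
          simp only [Fin.val_mk] at hA
          have hdb := hdbin ⟨k, hkT⟩
          simp only [Fin.val_mk] at hdb
          rcases hdb with h0 | h1
          · rw [if_neg (by omega)] at hA
            rw [ht, if_neg (fun hP => hA (hmem.mpr hP)), h0]
          · rw [if_pos h1] at hA
            rw [ht, if_pos (hmem.mp hA), h1]
      intro t
      exact hAll ((t : ℕ) + 1) t.isLt
  -- measurability of E
  have hAmeasQ : ∀ t : Fin T,
      MeasurableSet {x : ℝ × (ℝ × ℝ) | x.2 ∈ A t x.1} := by
    intro t
    have hS2 : MeasurableSet {x : ℝ × (ℝ × ℝ) | x.2 ∈ S t x.1} := by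
      have h1 : MeasurableSet {x : ℝ × (ℝ × ℝ) | x.2.1 < a t + σ₁ * x.1} :=
        measurableSet_lt (measurable_snd.fst)
          (measurable_const.add (measurable_fst.const_mul σ₁))
      have h2 : MeasurableSet {x : ℝ × (ℝ × ℝ) | x.2.2 < c t (d (t : ℕ)) + σ₂ * x.1} :=
        measurableSet_lt (measurable_snd.snd)
          (measurable_const.add (measurable_fst.const_mul σ₂))
      by_cases h : d (t : ℕ) = 1
      · have : {x : ℝ × (ℝ × ℝ) | x.2 ∈ S t x.1} =
            {x : ℝ × (ℝ × ℝ) | x.2.2 < c t (d (t : ℕ)) + σ₂ * x.1} := by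
          ext x; simp [hSdef, h]
        rw [this]; exact h2
      · have : {x : ℝ × (ℝ × ℝ) | x.2 ∈ S t x.1} =
            {x : ℝ × (ℝ × ℝ) | x.2.1 < a t + σ₁ * x.1} ∩
              {x : ℝ × (ℝ × ℝ) | x.2.2 < c t (d (t : ℕ)) + σ₂ * x.1} := by
          ext x; simp [hSdef, h]
        rw [this]; exact h1.inter h2
    simp only [hAdef]
    split
    · exact hS2
    · have : {x : ℝ × (ℝ × ℝ) | x.2 ∈ (S t x.1)ᶜ} =
          {x : ℝ × (ℝ × ℝ) | x.2 ∈ S t x.1}ᶜ := by ext x; simp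
      rw [this]; exact hS2.compl
  have hEmeas : MeasurableSet E := by
    have : E = ⋂ t : Fin T, (fun ω : ℝ × (Fin T → ℝ × ℝ) => (ω.1, ω.2 t)) ⁻¹'
        {x : ℝ × (ℝ × ℝ) | x.2 ∈ A t x.1} := by
      ext ω; simp [hEdef]
    rw [this]
    exact MeasurableSet.iInter fun t =>
      (hAmeasQ t).preimage (measurable_fst.prodMk ((measurable_pi_apply t).comp measurable_snd))
  -- slice
  have hslice : ∀ q : ℝ, Prod.mk q ⁻¹' E = Set.pi Set.univ (fun t => A t q) := by
    intro q; ext f; simp [hEdef, Set.mem_pi]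
  -- the ENNReal integrand
  set g : ℝ → ℝ≥0∞ := fun q => ∏ t : Fin T, ((ν t).prod (μ t)) (A t q) with hgdef
  have hApply : (F.prod (Measure.pi fun t : Fin T => (ν t).prod (μ t)))
      {ω | ∀ t : Fin T, D ((t : ℕ) + 1) ω = d ((t : ℕ) + 1)} = ∫⁻ q, g q ∂F := by
    rw [hE_eq, Measure.prod_apply hEmeas]
    refine lintegral_congr fun q => ?_
    rw [hslice q, Measure.pi_pi]
  -- measurability of g
  have hIio : ∀ (m : Measure ℝ), Measurable fun x : ℝ => m (Set.Iio x) := by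
    intro m
    exact Monotone.measurable fun x y hxy => measure_mono (Set.Iio_subset_Iio hxy)
  have hAval : ∀ (t : Fin T) (q : ℝ), ((ν t).prod (μ t)) (A t q) =
      if d ((t : ℕ) + 1) = 1 then
        ν t (Set.Iio (a t + σ₁ * q)) ^ (1 - d (t : ℕ)) *
          μ t (Set.Iio (c t (d (t : ℕ)) + σ₂ * q))
      else 1 - ν t (Set.Iio (a t + σ₁ * q)) ^ (1 - d (t : ℕ)) *
          μ t (Set.Iio (c t (d (t : ℕ)) + σ₂ * q)) := by
    intro t q
    simp only [hAdef]
    split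
    · exact hSval t q
    · rw [measure_compl (hSmeas t q) (measure_ne_top _ _), hSval t q]
      simp
  have hgmeas : Measurable g := by
    rw [hgdef]
    refine Finset.measurable_prod _ fun t _ => ?_
    have h1 : Measurable fun q : ℝ => ν t (Set.Iio (a t + σ₁ * q)) ^ (1 - d (t : ℕ)) *
        μ t (Set.Iio (c t (d (t : ℕ)) + σ₂ * q)) := by
      refine Measurable.mul ?_ ?_
      · exact ((hIio (ν t)).comp (measurable_const.add (measurable_id.const_mul σ₁))).pow_const _
      · exact (hIio (μ t)).comp (measurable_const.add (measurable_id.const_mul σ₂))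
    simp only [hAval]
    split
    · exact h1
    · exact measurable_const.sub h1
  have hgfin : ∀ q, g q < ⊤ := by
    intro q
    rw [hgdef]
    exact ENNReal.prod_lt_top fun t _ => measure_lt_top _ _
  -- put everything together
  rw [hApply, ← integral_toReal hgmeas.aemeasurable (Filter.Eventually.of_forall hgfin)]
  refine integral_congr_ae (Filter.Eventually.of_forall fun q => ?_)
  rw [hgdef]
  simp only
  rw [ENNReal.toReal_prod]
  refine Finset.prod_congr rfl fun t _ => ?_
  have hnuIio : {e : ℝ | e < a t + σ₁ * q} = Set.Iio (a t + σ₁ * q) := rfl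
  have hmuIio : {v : ℝ | v < c t (d (t : ℕ)) + σ₂ * q} =
      Set.Iio (c t (d (t : ℕ)) + σ₂ * q) := rfl
  rw [hAval t q, hnuIio, hmuIio]
  have hfin1 : ν t (Set.Iio (a t + σ₁ * q)) ≠ ⊤ := measure_ne_top _ _
  have hfin2 : μ t (Set.Iio (c t (d (t : ℕ)) + σ₂ * q)) ≠ ⊤ := measure_ne_top _ _
  have hle1 : ν t (Set.Iio (a t + σ₁ * q)) ^ (1 - d (t : ℕ)) *
      μ t (Set.Iio (c t (d (t : ℕ)) + σ₂ * q)) ≤ 1 := by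
    calc ν t (Set.Iio (a t + σ₁ * q)) ^ (1 - d (t : ℕ)) *
        μ t (Set.Iio (c t (d (t : ℕ)) + σ₂ * q)) ≤ 1 ^ (1 - d (t : ℕ)) * 1 :=
          mul_le_mul' (pow_le_pow_left' prob_le_one _) prob_le_one
      _ = 1 := by rw [one_pow, mul_one]
  rcases hdbin t with h0 | h1
  · rw [h0, if_neg (by norm_num : ¬(0 : ℕ) = 1),
      ENNReal.toReal_sub_of_le hle1 ENNReal.one_ne_top]
    simp [ENNReal.toReal_mul, ENNReal.toReal_pow]
  · rw [h1, if_pos rfl]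
    simp [ENNReal.toReal_mul, ENNReal.toReal_pow]
end
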